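/- Let G be a bi-valued symmetric multigraph with edge weights α > β ≥ 0, and let K be a non-trivial heavy component of G whose heavy edges induce a non-odd multitree (some pair of adjacent vertices is joined by an even number of heavy edges). Then there exist a partial envy-free orientation π of K and two distinct vertices v, w of K such that: (1) u_i(π_i) ≥ α for every vertex i of K; (2) all edges between v and w are oriented by π except possibly one light edge; (3) π is privately envy-free between v and w; and (4) at most one edge is oriented between each pair of vertices other than the pair {v, w}. -/

import Mathlib

set_option maxHeartbeats 1000000


/-- Bundle of an agent under a partial orientation. -/
def bundleP {V E : Type*} [Fintype E] [DecidableEq V] [DecidableEq E]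
    (π : E → Option V) (i : V) : Finset E :=
  Finset.univ.filter (fun e => π e = some i)

/-- Additive utility: an agent values an edge at its weight iff incident. -/
def util {V E : Type*} [DecidableEq V] (ends : E → V × V) (w : E → ℝ)
    (i : V) (S : Finset E) : ℝ :=
  ∑ e ∈ S, if (ends e).1 = i ∨ (ends e).2 = i then w e else 0

/-- The set of (non-loop) edges between two distinct vertices. -/
def edgesBetween {V E : Type*} [Fintype E] [DecidableEq V] [DecidableEq E]
    (ends : E → V × V) (i j : V) : Finset E :=
  Finset.univ.filter (fun e => ends e = (i, j) ∨ ends e = (j, i))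

/-- Reachability by paths of heavy edges. -/
def heavyReach {V E : Type*} (ends : E → V × V) (heavy : E → Bool) : V → V → Prop :=
  Relation.ReflTransGen (fun a b => ∃ e, heavy e = true ∧ (ends e = (a, b) ∨ ends e = (b, a)))

/-- The simple graph obtained by condensing the heavy edges. -/
def heavyGraph {V E : Type*} (ends : E → V × V) (heavy : E → Bool) : SimpleGraph V where
  Adj a b := a ≠ b ∧ ∃ e, heavy e = true ∧ (ends e = (a, b) ∨ ends e = (b, a))
  symm := ⟨by
    rintro a b ⟨hab, e, he, h⟩
    exact ⟨hab.symm, e, he, h.symm⟩⟩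
  loopless := ⟨by rintro a ⟨ha, -⟩; exact ha rfl⟩

/-- Two edges join the same pair of vertices (are parallel). -/
def samePair {V E : Type*} (ends : E → V × V) (e e' : E) : Prop :=
  ends e = ends e' ∨ ends e = (ends e').swap

/-- let `K` be a non-trivial heavy component of a bi-valued
symmetric multigraph whose heavy edges induce a multitree that is non-odd
(some adjacent pair of vertices of `K` is joined by a positive even number of
heavy edges). Then there exist a partial envy-free orientation `π` of `K` and
distinct vertices `v, w` of `K` such that (1) every vertex of `K` receives
utility at least `α`; (2) all edges between `v` and `w` are oriented except
possibly one light edge; (3) `π` is privately envy-free between `v` and `w`;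
and (4) at most one edge is oriented between each pair of vertices other than
the pair `{v, w}`. -/
theorem stmt8 {V E : Type*} [Fintype E] [DecidableEq V] [DecidableEq E]
    (ends : E → V × V) (heavy : E → Bool) (α β : ℝ) (hβ : 0 ≤ β) (hαβ : β < α)
    (w : E → ℝ) (hw : ∀ e, w e = if heavy e then α else β)
    (K : Finset V)
    -- K is a heavy component:
    (hconn : ∀ a ∈ K, ∀ b ∈ K, heavyReach ends heavy a b)
    (hmax : ∀ a ∈ K, ∀ b, heavyReach ends heavy a b → b ∈ K)
    -- K is non-trivial:
    (hnontriv : ∃ a ∈ K, ∃ b ∈ K, a ≠ b)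
    -- the heavy edges of K induce a multitree (no heavy self-loops, and the
    -- condensed heavy graph is acyclic within K):
    (hnoloop : ∀ e v, heavy e = true → ends e = (v, v) → v ∉ K)
    (hacyclic : ∀ v ∈ K, ∀ p : (heavyGraph ends heavy).Walk v v, ¬ p.IsCycle)
    -- the multitree is non-odd: some adjacent pair of K is joined by a
    -- (positive) even number of heavy edges:
    (hnonodd : ∃ a ∈ K, ∃ b ∈ K, a ≠ b ∧
        0 < ((edgesBetween ends a b).filter (fun e => heavy e = true)).card ∧
        Even ((edgesBetween ends a b).filter (fun e => heavy e = true)).card) :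
    ∃ π : E → Option V, ∃ v ∈ K, ∃ w' ∈ K, v ≠ w' ∧
      -- π is a partial orientation of K:
      (∀ e u, π e = some u → u = (ends e).1 ∨ u = (ends e).2) ∧
      (∀ e, π e ≠ none → (ends e).1 ∈ K ∧ (ends e).2 ∈ K) ∧
      -- π is envy-free:
      (∀ i j : V, util ends w i (bundleP π j) ≤ util ends w i (bundleP π i)) ∧
      -- (1) every vertex of K receives utility at least α:
      (∀ i ∈ K, α ≤ util ends w i (bundleP π i)) ∧
      -- (2) all edges between v and w' are oriented except possibly one light:
      (((edgesBetween ends v w').filter (fun e => π e = none)).card ≤ 1) ∧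
      (∀ e ∈ edgesBetween ends v w', π e = none → heavy e = false) ∧
      -- (3) π is PEF between v and w':
      (util ends w v (bundleP π v ∩ edgesBetween ends v w')
        = util ends w v (bundleP π w' ∩ edgesBetween ends v w')) ∧
      (util ends w w' (bundleP π v ∩ edgesBetween ends v w')
        = util ends w w' (bundleP π w' ∩ edgesBetween ends v w')) ∧
      -- (4) at most one edge oriented between each pair other than {v, w'}:
      (∀ e e', π e ≠ none → π e' ≠ none → samePair ends e e' →
        e ≠ e' → e ∈ edgesBetween ends v w') := by
  classical
  obtain ⟨a, ha, b, hb, hab, hpos, heven⟩ := hnonodd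
  set G := heavyGraph ends heavy with hG
  have reach : ∀ x y : V, heavyReach ends heavy x y → G.Reachable x y := by
    intro x y h
    induction h with
    | refl => exact SimpleGraph.Reachable.refl x
    | tail h1 h2 ih =>
      rename_i p q
      obtain ⟨e, he, hE⟩ := h2
      by_cases hpq : p = q
      · subst hpq; exact ih
      · exact ih.trans (SimpleGraph.Adj.reachable ⟨hpq, e, he, hE⟩)
  have hstepex : ∀ u, u ∈ K → u ≠ a → ∃ e, heavy e = true ∧ ∃ z,
      (ends e = (u, z) ∨ ends e = (z, u)) ∧ G.dist z a < G.dist u a := by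
    intro u hu hua
    obtain ⟨p, hp⟩ := (reach u a (hconn u hu a ha)).exists_walk_length_eq_dist
    cases p with
    | nil => exact absurd rfl hua
    | cons hadj q =>
      rename_i z
      obtain ⟨hne, e, he, hE⟩ := hadj
      refine ⟨e, he, z, hE, ?_⟩
      have h1 := SimpleGraph.dist_le q
      have h3 : G.dist u a = q.length + 1 := by rw [← hp]; rfl
      omega
  have hEne : Nonempty E := by
    obtain ⟨e, -⟩ := Finset.card_pos.mp hpos; exact ⟨e⟩
  obtain ⟨e₀⟩ := hEne
  set f : V → E := fun u =>
    if h : ∃ e, heavy e = true ∧ ∃ z, (ends e = (u, z) ∨ ends e = (z, u)) ∧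
        G.dist z a < G.dist u a
    then h.choose else e₀ with hf
  have hfP : ∀ u, u ∈ K → u ≠ a → heavy (f u) = true ∧ ∃ z,
      (ends (f u) = (u, z) ∨ ends (f u) = (z, u)) ∧ G.dist z a < G.dist u a := by
    intro u hu hua
    have h := hstepex u hu hua
    simp only [hf]
    rw [dif_pos h]
    exact h.choose_spec
  have pairkey : ∀ (u z u' z' : V) (p q : V × V),
      (p = (u, z) ∨ p = (z, u)) → (q = (u', z') ∨ q = (z', u')) →
      (p = q ∨ p = q.swap) → (u = u' ∧ z = z') ∨ (u = z' ∧ z = u') := by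
    intro u z u' z' p q h1 h2 h3
    rcases h1 with rfl | rfl <;> rcases h2 with rfl | rfl <;>
      rcases h3 with h | h <;>
      simp only [Prod.swap_prod_mk, Prod.mk.injEq] at h <;> tauto
  have funiq : ∀ u, u ∈ K → u ≠ a → ∀ u', u' ∈ K → u' ≠ a → f u = f u' → u = u' := by
    intro u hu hua u' hu' hua' hff
    obtain ⟨-, z, hz, hd⟩ := hfP u hu hua
    obtain ⟨-, z', hz', hd'⟩ := hfP u' hu' hua'
    rw [hff] at hz
    rcases pairkey u z u' z' (ends (f u')) (ends (f u')) hz hz' (Or.inl rfl) with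
      ⟨h1, h2⟩ | ⟨h1, h2⟩
    · exact h1
    · subst h1; subst h2; omega
  set EB := edgesBetween ends a b with hEB
  set H := EB.filter (fun e => heavy e = true) with hH
  set L := EB.filter (fun e => heavy e = false) with hL
  obtain ⟨k, hk⟩ := heven
  have hk1 : 1 ≤ k := by omega
  obtain ⟨Ha, hHaS, hHaC⟩ := Finset.exists_subset_card_eq (by omega : k ≤ H.card)
  set Hb := H \ Ha with hHb
  have hHbC : Hb.card = k := by rw [hHb, Finset.card_sdiff_of_subset hHaS, hHaC]; omega
  set t := L.card / 2 with ht
  obtain ⟨La, hLaS, hLaC⟩ := Finset.exists_subset_card_eq (Nat.div_le_self _ _ : t ≤ L.card)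
  have hLsd : (L \ La).card = L.card - t := by rw [Finset.card_sdiff_of_subset hLaS, hLaC]
  obtain ⟨Lb, hLbS, hLbC⟩ := Finset.exists_subset_card_eq (by rw [hLsd]; omega : t ≤ (L \ La).card)
  have hEBmem : ∀ e ∈ EB, ends e = (a, b) ∨ ends e = (b, a) := by
    intro e he
    rw [hEB, edgesBetween, Finset.mem_filter] at he
    exact he.2
  have hHmem : ∀ e ∈ H, heavy e = true := by
    intro e he; rw [hH, Finset.mem_filter] at he; exact he.2
  have hLmem : ∀ e ∈ L, heavy e = false := by
    intro e he; rw [hL, Finset.mem_filter] at he; exact he.2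
  have hHsub : H ⊆ EB := Finset.filter_subset _ _
  have hLsub : L ⊆ EB := Finset.filter_subset _ _
  have hsubEB1 : Ha ∪ La ⊆ EB :=
    Finset.union_subset (hHaS.trans hHsub) (hLaS.trans hLsub)
  have hLbL : Lb ⊆ L := hLbS.trans Finset.sdiff_subset
  have hHbH : Hb ⊆ H := Finset.sdiff_subset
  have hsubEB2 : Hb ∪ Lb ⊆ EB :=
    Finset.union_subset (hHbH.trans hHsub) (hLbL.trans hLsub)
  have hfEB : ∀ u, u ∈ K → u ≠ a → u ≠ b → f u ∉ EB := by
    intro u hu hua hub hmem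
    obtain ⟨-, z, hz, -⟩ := hfP u hu hua
    have h2 := hEBmem _ hmem
    rcases hz with h | h <;> rcases h2 with h' | h' <;> rw [h] at h' <;>
      simp only [Prod.mk.injEq] at h' <;> tauto
  set π : E → Option V := fun e =>
    if e ∈ Ha ∪ La then some a
    else if e ∈ Hb ∪ Lb then some b
    else if h : ∃ u, u ∈ K ∧ u ≠ a ∧ u ≠ b ∧ f u = e then some h.choose
    else none with hπ
  have hπ_some : ∀ e u, π e = some u →
      (e ∈ Ha ∪ La ∧ u = a) ∨ (e ∈ Hb ∪ Lb ∧ u = b) ∨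
      (u ∈ K ∧ u ≠ a ∧ u ≠ b ∧ f u = e) := by
    intro e u h
    simp only [hπ] at h
    by_cases h1 : e ∈ Ha ∪ La
    · rw [if_pos h1] at h
      exact Or.inl ⟨h1, (Option.some_inj.mp h).symm⟩
    rw [if_neg h1] at h
    by_cases h2 : e ∈ Hb ∪ Lb
    · rw [if_pos h2] at h
      exact Or.inr (Or.inl ⟨h2, (Option.some_inj.mp h).symm⟩)
    rw [if_neg h2] at h
    by_cases h3 : ∃ u', u' ∈ K ∧ u' ≠ a ∧ u' ≠ b ∧ f u' = e
    · rw [dif_pos h3] at h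
      have hspec := h3.choose_spec
      have hu : h3.choose = u := Option.some_inj.mp h
      exact Or.inr (Or.inr (hu ▸ hspec))
    · rw [dif_neg h3] at h
      exact absurd h (by simp)
  have hπa : ∀ e ∈ Ha ∪ La, π e = some a := by
    intro e he; simp only [hπ]; rw [if_pos he]
  have hdisj12 : ∀ e, e ∈ Hb ∪ Lb → e ∉ Ha ∪ La := by
    intro e he hc
    rcases Finset.mem_union.mp he with h | h <;> rcases Finset.mem_union.mp hc with h' | h'
    · exact (Finset.mem_sdiff.mp h).2 h'
    · have h1 := hHmem e (hHbH h)
      have h2 := hLmem e (hLaS h')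
      rw [h1] at h2; exact Bool.noConfusion h2
    · have h1 := hLmem e (hLbL h)
      have h2 := hHmem e (hHaS h')
      rw [h2] at h1; exact Bool.noConfusion h1
    · exact (Finset.mem_sdiff.mp (hLbS h)).2 h'
  have hπb : ∀ e ∈ Hb ∪ Lb, π e = some b := by
    intro e he; simp only [hπ]; rw [if_neg (hdisj12 e he), if_pos he]
  have hπf : ∀ u, u ∈ K → u ≠ a → u ≠ b → π (f u) = some u := by
    intro u hu hua hub
    have hnotEB := hfEB u hu hua hub
    have h1 : f u ∉ Ha ∪ La := fun hc => hnotEB (hsubEB1 hc)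
    have h2 : f u ∉ Hb ∪ Lb := fun hc => hnotEB (hsubEB2 hc)
    have hex : ∃ u', u' ∈ K ∧ u' ≠ a ∧ u' ≠ b ∧ f u' = f u := ⟨u, hu, hua, hub, rfl⟩
    simp only [hπ]
    rw [if_neg h1, if_neg h2, dif_pos hex]
    obtain ⟨hu', hua', -, hff⟩ := hex.choose_spec
    exact congrArg some (funiq _ hu' hua' _ hu hua hff)
  have hbK : ∀ e u, π e = some u →
      (u = (ends e).1 ∨ u = (ends e).2) ∧ (ends e).1 ∈ K ∧ (ends e).2 ∈ K ∧ u ∈ K := by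
    intro e u h
    rcases hπ_some e u h with ⟨he, rfl⟩ | ⟨he, rfl⟩ | ⟨huK, hua, hub, hfe⟩
    · rcases hEBmem e (hsubEB1 he) with h' | h' <;> rw [h']
      · exact ⟨Or.inl rfl, ha, hb, ha⟩
      · exact ⟨Or.inr rfl, hb, ha, ha⟩
    · rcases hEBmem e (hsubEB2 he) with h' | h' <;> rw [h']
      · exact ⟨Or.inr rfl, ha, hb, hb⟩
      · exact ⟨Or.inl rfl, hb, ha, hb⟩
    · subst hfe
      obtain ⟨hh, z, hz, -⟩ := hfP u huK hua
      have hzK : z ∈ K := hmax u huK z (Relation.ReflTransGen.single ⟨f u, hh, hz⟩)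
      rcases hz with h' | h' <;> rw [h']
      · exact ⟨Or.inl rfl, huK, hzK, huK⟩
      · exact ⟨Or.inr rfl, hzK, huK, huK⟩
  have hbundle_a : bundleP π a = Ha ∪ La := by
    ext e
    simp only [bundleP, Finset.mem_filter, Finset.mem_univ, true_and]
    constructor
    · intro h
      rcases hπ_some e a h with ⟨he, -⟩ | ⟨-, hba⟩ | ⟨-, hna, -⟩
      · exact he
      · exact absurd hba hab
      · exact absurd rfl hna
    · exact hπa e
  have hbundle_b : bundleP π b = Hb ∪ Lb := by
    ext e
    simp only [bundleP, Finset.mem_filter, Finset.mem_univ, true_and]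
    constructor
    · intro h
      rcases hπ_some e b h with ⟨-, hba⟩ | ⟨he, -⟩ | ⟨-, -, hnb, -⟩
      · exact absurd hba (Ne.symm hab)
      · exact he
      · exact absurd rfl hnb
    · exact hπb e
  have hbundle_u : ∀ u, u ∈ K → u ≠ a → u ≠ b → bundleP π u = {f u} := by
    intro u hu hua hub
    ext e
    simp only [bundleP, Finset.mem_filter, Finset.mem_univ, true_and,
      Finset.mem_singleton]
    constructor
    · intro h
      rcases hπ_some e u h with ⟨-, h'⟩ | ⟨-, h'⟩ | ⟨-, -, -, hfe⟩
      · exact absurd h' hua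
      · exact absurd h' hub
      · exact hfe.symm
    · rintro rfl; exact hπf u hu hua hub
  have hbundle_out : ∀ j, j ∉ K → bundleP π j = ∅ := by
    intro j hj
    ext e
    simp only [bundleP, Finset.mem_filter, Finset.mem_univ, true_and,
      Finset.notMem_empty, iff_false]
    intro h
    exact hj (hbK e j h).2.2.2
  -- utility helpers
  have hw0 : ∀ e, 0 ≤ w e := by
    intro e; rw [hw]; split <;> linarith
  have hwle : ∀ e, w e ≤ α := by
    intro e; rw [hw]; split <;> linarith
  have hα0 : (0:ℝ) < α := lt_of_le_of_lt hβ hαβ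
  have util_nonneg : ∀ (i : V) (S : Finset E), 0 ≤ util ends w i S := by
    intro i S
    apply Finset.sum_nonneg
    intro e _
    split
    · exact hw0 e
    · exact le_refl 0
  have util_zero : ∀ (i : V) (S : Finset E),
      (∀ e ∈ S, ¬((ends e).1 = i ∨ (ends e).2 = i)) → util ends w i S = 0 := by
    intro i S h
    apply Finset.sum_eq_zero
    intro e he
    rw [if_neg (h e he)]
  have util_all : ∀ (i : V) (S : Finset E),
      (∀ e ∈ S, (ends e).1 = i ∨ (ends e).2 = i) →
      util ends w i S = ∑ e ∈ S, w e := by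
    intro i S h
    apply Finset.sum_congr rfl
    intro e he
    rw [if_pos (h e he)]
  have util_single_le : ∀ (i : V) (e : E), util ends w i {e} ≤ α := by
    intro i e
    show (∑ e ∈ ({e} : Finset E), _) ≤ α
    rw [Finset.sum_singleton]
    split
    · exact hwle e
    · exact le_of_lt hα0
  have hsum_subH : ∀ S ⊆ H, ∑ e ∈ S, w e = S.card * α := by
    intro S hS
    have hc : ∀ e ∈ S, w e = α := by
      intro e he
      rw [hw e, hHmem e (hS he)]
      simp only [if_true]
    rw [Finset.sum_congr rfl hc, Finset.sum_const, nsmul_eq_mul]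
  have hsum_subL : ∀ S ⊆ L, ∑ e ∈ S, w e = S.card * β := by
    intro S hS
    have hc : ∀ e ∈ S, w e = β := by
      intro e he
      rw [hw e, hLmem e (hS he)]
      simp only [Bool.false_eq_true, if_false]
    rw [Finset.sum_congr rfl hc, Finset.sum_const, nsmul_eq_mul]
  have hHLdisj : Disjoint H L := by
    rw [Finset.disjoint_left]
    intro e he hl
    have h1 := hHmem e he
    have h2 := hLmem e hl
    rw [h1] at h2
    exact Bool.noConfusion h2
  have hdisj_a : Disjoint Ha La := hHLdisj.mono hHaS hLaS
  have hdisj_b : Disjoint Hb Lb := hHLdisj.mono hHbH hLbL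
  have hinc_ab : ∀ i, i = a ∨ i = b → ∀ e ∈ EB, (ends e).1 = i ∨ (ends e).2 = i := by
    intro i hi e he
    rcases hEBmem e he with h | h <;> rcases hi with rfl | rfl <;> rw [h] <;> simp
  have hnotinc : ∀ i, i ≠ a → i ≠ b → ∀ e ∈ EB,
      ¬((ends e).1 = i ∨ (ends e).2 = i) := by
    intro i hia hib e he
    rcases hEBmem e he with h | h <;> rw [h] <;> rintro (h' | h')
    · exact hia h'.symm
    · exact hib h'.symm
    · exact hib h'.symm
    · exact hia h'.symm
  have hval : ∀ i, i = a ∨ i = b → ∀ (S T : Finset E), S ⊆ H → T ⊆ L → Disjoint S T →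
      util ends w i (S ∪ T) = S.card * α + T.card * β := by
    intro i hi S T hS hT hST
    rw [util_all i _ (fun e he => hinc_ab i hi e (by
      rcases Finset.mem_union.mp he with h | h
      exacts [hHsub (hS h), hLsub (hT h)]))]
    rw [Finset.sum_union hST, hsum_subH S hS, hsum_subL T hT]
  have hval_fi : ∀ i, i ∈ K → i ≠ a → util ends w i {f i} = α := by
    intro i hi hia
    obtain ⟨hh, z, hz, -⟩ := hfP i hi hia
    show (∑ e ∈ ({f i} : Finset E), _) = α
    rw [Finset.sum_singleton, if_pos (by rcases hz with h | h <;> rw [h] <;> simp),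
      hw, hh]
    simp
  have hval_aa : util ends w a (Ha ∪ La) = k * α + t * β := by
    rw [hval a (Or.inl rfl) Ha La hHaS hLaS hdisj_a, hHaC, hLaC]
  have hval_ab : util ends w a (Hb ∪ Lb) = k * α + t * β := by
    rw [hval a (Or.inl rfl) Hb Lb hHbH hLbL hdisj_b, hHbC, hLbC]
  have hval_ba : util ends w b (Ha ∪ La) = k * α + t * β := by
    rw [hval b (Or.inr rfl) Ha La hHaS hLaS hdisj_a, hHaC, hLaC]
  have hval_bb : util ends w b (Hb ∪ Lb) = k * α + t * β := by
    rw [hval b (Or.inr rfl) Hb Lb hHbH hLbL hdisj_b, hHbC, hLbC]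
  have hαk : α ≤ k * α + t * β := by
    have h1 : (1:ℝ) ≤ (k:ℝ) := by exact_mod_cast hk1
    have h2 : (0:ℝ) ≤ (t:ℝ) := Nat.cast_nonneg t
    have h3 : α ≤ (k:ℝ) * α := le_mul_of_one_le_left hα0.le h1
    have h4 : (0:ℝ) ≤ (t:ℝ) * β := mul_nonneg h2 hβ
    linarith
  -- envy-freeness bound on any bundle, seen from i
  have hub : ∀ (i : V), i ∈ K → i ≠ a → i ≠ b → ∀ j : V,
      util ends w i (bundleP π j) ≤ α := by
    intro i hi hia hib j
    by_cases hja : j = a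
    · subst hja
      rw [hbundle_a, util_zero i _ (fun e he => hnotinc i hia hib e (hsubEB1 he))]
      exact le_of_lt hα0
    by_cases hjb : j = b
    · subst hjb
      rw [hbundle_b, util_zero i _ (fun e he => hnotinc i hia hib e (hsubEB2 he))]
      exact le_of_lt hα0
    by_cases hjK : j ∈ K
    · rw [hbundle_u j hjK hja hjb]; exact util_single_le i _
    · rw [hbundle_out j hjK]
      have : util ends w i (∅ : Finset E) = 0 := by
        apply util_zero; intro e he; exact absurd he (Finset.notMem_empty e)
      rw [this]; exact le_of_lt hα0
  have hDgoal : ∀ i ∈ K, α ≤ util ends w i (bundleP π i) := by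
    intro i hi
    by_cases hia : i = a
    · rw [hia, hbundle_a, hval_aa]; exact hαk
    by_cases hib : i = b
    · rw [hib, hbundle_b, hval_bb]; exact hαk
    rw [hbundle_u i hi hia hib, hval_fi i hi hia]
  have hEF : ∀ i j : V, util ends w i (bundleP π j) ≤ util ends w i (bundleP π i) := by
    intro i j
    by_cases hiK : i ∈ K
    · by_cases hia : i = a
      · rw [hia, hbundle_a, hval_aa]
        by_cases hja : j = a
        · rw [hja, hbundle_a, hval_aa]
        by_cases hjb : j = b
        · rw [hjb, hbundle_b, hval_ab]
        by_cases hjK : j ∈ K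
        · rw [hbundle_u j hjK hja hjb]
          exact le_trans (util_single_le a _) hαk
        · rw [hbundle_out j hjK]
          exact le_trans (le_of_eq (by
            apply util_zero; intro e he; exact absurd he (Finset.notMem_empty e)))
            (le_trans (le_of_lt hα0) hαk)
      by_cases hib : i = b
      · rw [hib, hbundle_b, hval_bb]
        by_cases hja : j = a
        · rw [hja, hbundle_a, hval_ba]
        by_cases hjb : j = b
        · rw [hjb, hbundle_b, hval_bb]
        by_cases hjK : j ∈ K
        · rw [hbundle_u j hjK hja hjb]
          exact le_trans (util_single_le b _) hαk
        · rw [hbundle_out j hjK]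
          exact le_trans (le_of_eq (by
            apply util_zero; intro e he; exact absurd he (Finset.notMem_empty e)))
            (le_trans (le_of_lt hα0) hαk)
      · rw [hbundle_u i hiK hia hib, hval_fi i hiK hia]
        exact hub i hiK hia hib j
    · have hz : util ends w i (bundleP π j) = 0 := by
        apply util_zero
        intro e he hinc
        rw [bundleP, Finset.mem_filter] at he
        rcases hinc with h | h
        · exact hiK (h ▸ (hbK e j he.2).2.1)
        · exact hiK (h ▸ (hbK e j he.2).2.2.1)
      rw [hz]
      exact util_nonneg i _
  refine ⟨π, a, ha, b, hb, hab, ?_, ?_, hEF, hDgoal, ?_, ?_, ?_, ?_, ?_⟩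
  · intro e u h
    exact (hbK e u h).1
  · intro e h
    obtain ⟨u, hu⟩ := Option.ne_none_iff_exists'.mp h
    exact ⟨(hbK e u hu).2.1, (hbK e u hu).2.2.1⟩
  · -- (2) card of unoriented edges between a and b
    have hsub : EB.filter (fun e => π e = none) ⊆ L \ (La ∪ Lb) := by
      intro e he
      rw [Finset.mem_filter] at he
      obtain ⟨heEB, hn⟩ := he
      have h1 : e ∉ Ha ∪ La := fun hc => by rw [hπa e hc] at hn; exact Option.some_ne_none _ hn
      have h2 : e ∉ Hb ∪ Lb := fun hc => by rw [hπb e hc] at hn; exact Option.some_ne_none _ hn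
      have heL : e ∈ L := by
        rcases Bool.eq_false_or_eq_true (heavy e) with hh | hh
        · have heH : e ∈ H := by rw [hH]; exact Finset.mem_filter.mpr ⟨heEB, hh⟩
          by_cases hHa' : e ∈ Ha
          · exact absurd (Finset.mem_union_left _ hHa') h1
          · exact absurd (Finset.mem_union_left _
              (Finset.mem_sdiff.mpr ⟨heH, hHa'⟩)) h2
        · rw [hL]; exact Finset.mem_filter.mpr ⟨heEB, hh⟩
      refine Finset.mem_sdiff.mpr ⟨heL, fun hc => ?_⟩
      rcases Finset.mem_union.mp hc with h | h
      · exact h1 (Finset.mem_union_right _ h)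
      · exact h2 (Finset.mem_union_right _ h)
    have hdisjLab : Disjoint La Lb := by
      rw [Finset.disjoint_left]
      intro e he hc
      exact (Finset.mem_sdiff.mp (hLbS hc)).2 he
    have hcard : (L \ (La ∪ Lb)).card ≤ 1 := by
      rw [Finset.card_sdiff_of_subset (Finset.union_subset hLaS hLbL),
        Finset.card_union_of_disjoint hdisjLab, hLaC, hLbC]
      omega
    exact le_trans (Finset.card_le_card hsub) hcard
  · -- unoriented edges between a and b are light
    intro e he hn
    have h1 : e ∉ Ha ∪ La := fun hc => by rw [hπa e hc] at hn; exact Option.some_ne_none _ hn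
    have h2 : e ∉ Hb ∪ Lb := fun hc => by rw [hπb e hc] at hn; exact Option.some_ne_none _ hn
    rcases Bool.eq_false_or_eq_true (heavy e) with hh | hh
    · have heH : e ∈ H := by rw [hH]; exact Finset.mem_filter.mpr ⟨he, hh⟩
      by_cases hHa' : e ∈ Ha
      · exact absurd (Finset.mem_union_left _ hHa') h1
      · exact absurd (Finset.mem_union_left _ (Finset.mem_sdiff.mpr ⟨heH, hHa'⟩)) h2
    · exact hh
  · -- PEF (3), for a
    rw [hbundle_a, hbundle_b, Finset.inter_eq_left.mpr hsubEB1,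
      Finset.inter_eq_left.mpr hsubEB2, hval_aa, hval_ab]
  · -- PEF (3), for b
    rw [hbundle_a, hbundle_b, Finset.inter_eq_left.mpr hsubEB1,
      Finset.inter_eq_left.mpr hsubEB2, hval_ba, hval_bb]
  · -- (4)
    intro e e' hne hne' hsp hee
    obtain ⟨u1, hu1⟩ := Option.ne_none_iff_exists'.mp hne
    obtain ⟨u2, hu2⟩ := Option.ne_none_iff_exists'.mp hne'
    rcases hπ_some e u1 hu1 with ⟨he, -⟩ | ⟨he, -⟩ | ⟨hK1, ha1, hb1, hf1⟩
    · exact hsubEB1 he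
    · exact hsubEB2 he
    exfalso
    obtain ⟨-, z, hz, hd⟩ := hfP u1 hK1 ha1
    rw [hf1] at hz
    rcases hπ_some e' u2 hu2 with ⟨he', -⟩ | ⟨he', -⟩ | ⟨hK2, ha2, hb2, hf2⟩
    · rcases pairkey u1 z a b (ends e) (ends e') hz (hEBmem e' (hsubEB1 he')) hsp with
        ⟨h1, -⟩ | ⟨h1, -⟩
      exacts [ha1 h1, hb1 h1]
    · rcases pairkey u1 z a b (ends e) (ends e') hz (hEBmem e' (hsubEB2 he')) hsp with
        ⟨h1, -⟩ | ⟨h1, -⟩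
      exacts [ha1 h1, hb1 h1]
    · obtain ⟨-, z', hz', hd'⟩ := hfP u2 hK2 ha2
      rw [hf2] at hz'
      rcases pairkey u1 z u2 z' (ends e) (ends e') hz hz' hsp with ⟨h1, h2⟩ | ⟨h1, h2⟩
      · apply hee
        rw [← hf1, ← hf2, h1]
      · subst h1; subst h2; omega
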